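/- Let I be a finite set and p_i ∈ [0,1] for i ∈ I, with p_0 := 0. Then for every z ∈ {0,1}^I, max_{i∈I} p_i z_i = min over ℓ ∈ {0} ∪ I of (p_ℓ + ∑_{i∈I} max(p_i - p_ℓ, 0) · z_i). -/

import Mathlib

open Finset

theorem stmt1 {I : Type*} [Fintype I] [Nonempty I] (p : I → ℝ)
    (hp : ∀ i, p i ∈ Set.Icc (0:ℝ) 1) (z : I → ℝ) (hz : ∀ i, z i = 0 ∨ z i = 1) :
    univ.sup' univ_nonempty (fun i => p i * z i) =
      univ.inf' univ_nonempty (fun ℓ : Option I =>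
        (ℓ.elim 0 p) + ∑ i, max (p i - ℓ.elim 0 p) 0 * z i) := by
  have hz0 : ∀ i, 0 ≤ z i := by
    intro i; rcases hz i with h | h <;> simp [h]
  have hterm : ∀ (q : ℝ) (i : I), 0 ≤ max (p i - q) 0 * z i := by
    intro q i; exact mul_nonneg (le_max_right _ _) (hz0 i)
  apply le_antisymm
  · apply Finset.le_inf'
    intro ℓ _
    apply Finset.sup'_le
    intro j _
    rcases hz j with h | h
    · simp only [h, mul_zero]
      have hq : (0:ℝ) ≤ ℓ.elim 0 p := by
        cases ℓ with
        | none => simp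
        | some i => exact (hp i).1
      exact add_nonneg hq (Finset.sum_nonneg fun i _ => hterm _ i)
    · simp only [h, mul_one]
      have h1 : max (p j - ℓ.elim 0 p) 0 * z j ≤ ∑ i, max (p i - ℓ.elim 0 p) 0 * z i :=
        Finset.single_le_sum (fun i _ => hterm _ i) (mem_univ j)
      have h2 : p j - ℓ.elim 0 p ≤ max (p j - ℓ.elim 0 p) 0 * z j := by
        rw [h, mul_one]; exact le_max_left _ _
      linarith
  · by_cases hex : ∃ j, z j = 1
    · obtain ⟨S, hS⟩ : ∃ S : Finset I, S = univ.filter (fun i => z i = 1) := ⟨_, rfl⟩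
      have hSne : S.Nonempty := by
        obtain ⟨j, hj⟩ := hex
        exact ⟨j, by simp [hS, hj]⟩
      obtain ⟨j, hjS, hjmax⟩ := S.exists_max_image p hSne
      have hzj : z j = 1 := by simpa [hS] using hjS
      have h1 : univ.inf' univ_nonempty (fun ℓ : Option I =>
          (ℓ.elim 0 p) + ∑ i, max (p i - ℓ.elim 0 p) 0 * z i) ≤ p j := by
        refine le_trans (Finset.inf'_le _ (mem_univ (some j))) ?_
        simp only [Option.elim]
        have : ∑ i, max (p i - p j) 0 * z i = 0 := by
          apply Finset.sum_eq_zero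
          intro i _
          rcases hz i with h | h
          · simp [h]
          · have hiS : i ∈ S := by simp [hS, h]
            have := hjmax i hiS
            simp [h, max_eq_right (by linarith : p i - p j ≤ 0)]
        rw [this]; simp
      have h2 : p j ≤ univ.sup' univ_nonempty (fun i => p i * z i) := by
        have := Finset.le_sup' (fun i => p i * z i) (mem_univ j)
        simp only [hzj, mul_one] at this; exact this
      linarith
    · push_neg at hex
      have h1 : univ.inf' univ_nonempty (fun ℓ : Option I =>
          (ℓ.elim 0 p) + ∑ i, max (p i - ℓ.elim 0 p) 0 * z i) ≤ 0 := by
        refine le_trans (Finset.inf'_le _ (mem_univ none)) ?_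
        simp only [Option.elim]
        have : ∑ i, max (p i - 0) 0 * z i = 0 := by
          apply Finset.sum_eq_zero
          intro i _
          rcases hz i with h | h
          · simp [h]
          · exact absurd h (hex i)
        rw [this]; simp
      obtain ⟨i⟩ := ‹Nonempty I›
      have h2 : (0:ℝ) ≤ univ.sup' univ_nonempty (fun i => p i * z i) := by
        have := Finset.le_sup' (fun i => p i * z i) (mem_univ i)
        have hzi : z i = 0 := by rcases hz i with h | h; exact h; exact absurd h (hex i)
        simp only [hzi, mul_zero] at this; exact this
      linarith
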